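/- For 0 < a < b, the maps Π^{a,b}, Π^{b,c}, Π^{a,c} defined by time-changing out excursions above the respective level satisfy the compatibility (semigroup) property: Π^{a,b} ∘ Π^{b,c} = Π^{a,c} on C([0,∞), [0,c]) for 0 < a < b < c, for functions u with ∫₀^∞ 1_{u(r) ≤ a} dr = ∞. -/
import Mathlib


open MeasureTheory Filter Set

/-- The time spent by `u` at or below level `a` up to time `s`:
`ρ_u^a(s) = ∫₀ˢ 1_{u(r) ≤ a} dr`. -/
noncomputable def timeBelow (a : ℝ) (u : ℝ → ℝ) (s : ℝ) : ℝ :=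
  (MeasureTheory.volume {r : ℝ | r ∈ Set.Ioc (0 : ℝ) s ∧ u r ≤ a}).toReal

/-- The right-continuous inverse of `ρ_u^a`. -/
noncomputable def timeBelowInv (a : ℝ) (u : ℝ → ℝ) (s : ℝ) : ℝ :=
  sInf {r : ℝ | 0 ≤ r ∧ s < timeBelow a u r}

/-- `Π^a(u)(s) = u ((ρ_u^a)⁻¹ (s))`: the trajectory `u` with its excursions above level `a`
chopped out. -/
noncomputable def chop (a : ℝ) (u : ℝ → ℝ) : ℝ → ℝ :=
  fun s => u (timeBelowInv a u s)

/-- The underlying ENNReal-valued measure. -/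
noncomputable def tbM (a : ℝ) (u : ℝ → ℝ) (s : ℝ) : ENNReal :=
  MeasureTheory.volume ({x : ℝ | u x ≤ a} ∩ Set.Ioc 0 s)

lemma tbM_set_eq (a : ℝ) (u : ℝ → ℝ) (s : ℝ) :
    {r : ℝ | r ∈ Set.Ioc (0 : ℝ) s ∧ u r ≤ a} = {x : ℝ | u x ≤ a} ∩ Set.Ioc 0 s := by
  ext r; simp [and_comm]

lemma timeBelow_eq (a : ℝ) (u : ℝ → ℝ) (s : ℝ) :
    timeBelow a u s = (tbM a u s).toReal := by
  rw [timeBelow, tbM, tbM_set_eq]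

lemma tbM_ne_top (a : ℝ) (u : ℝ → ℝ) (s : ℝ) : tbM a u s ≠ ⊤ := by
  refine ne_of_lt (lt_of_le_of_lt (measure_mono inter_subset_right) ?_)
  simp [Real.volume_Ioc]

lemma tbM_mono (a : ℝ) (u : ℝ → ℝ) {s t : ℝ} (h : s ≤ t) : tbM a u s ≤ tbM a u t :=
  measure_mono (inter_subset_inter_right _ (Ioc_subset_Ioc_right h))

lemma timeBelow_mono (a : ℝ) (u : ℝ → ℝ) : Monotone (timeBelow a u) := by
  intro s t h
  rw [timeBelow_eq, timeBelow_eq]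
  exact ENNReal.toReal_mono (tbM_ne_top a u t) (tbM_mono a u h)

lemma timeBelow_nonneg (a : ℝ) (u : ℝ → ℝ) (s : ℝ) : 0 ≤ timeBelow a u s :=
  ENNReal.toReal_nonneg

lemma timeBelow_nonpos (a : ℝ) (u : ℝ → ℝ) {s : ℝ} (h : s ≤ 0) : timeBelow a u s = 0 := by
  rw [timeBelow_eq, tbM]
  rw [Ioc_eq_empty (by linarith)]
  simp

lemma measurableSet_below {a : ℝ} {u : ℝ → ℝ} (hu : Continuous u) :
    MeasurableSet {x : ℝ | u x ≤ a} :=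
  (isClosed_le hu continuous_const).measurableSet

/-- additivity -/
lemma tbM_add (a : ℝ) {u : ℝ → ℝ} (hu : Continuous u) {p q : ℝ} (hp : 0 ≤ p) (hpq : p ≤ q) :
    tbM a u q = tbM a u p + volume ({x : ℝ | u x ≤ a} ∩ Set.Ioc p q) := by
  rw [tbM, tbM, ← measure_union _ ((measurableSet_below hu).inter measurableSet_Ioc)]
  · rw [← inter_union_distrib_left, Ioc_union_Ioc_eq_Ioc hp hpq]
  · exact Disjoint.mono inter_subset_right inter_subset_right
      (by rw [Set.disjoint_iff]; rintro x ⟨⟨-, h1⟩, h2, -⟩; exact absurd h2 (not_lt.2 h1))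

lemma tbM_Ioc (a : ℝ) {u : ℝ → ℝ} (hu : Continuous u) {p q : ℝ} (hp : 0 ≤ p) (hpq : p ≤ q) :
    volume ({x : ℝ | u x ≤ a} ∩ Set.Ioc p q)
      = ENNReal.ofReal (timeBelow a u q - timeBelow a u p) := by
  have h := tbM_add a hu hp hpq
  have hfin : volume ({x : ℝ | u x ≤ a} ∩ Set.Ioc p q) ≠ ⊤ := by
    refine ne_of_lt (lt_of_le_of_lt (measure_mono inter_subset_right) ?_)
    simp [Real.volume_Ioc]
  rw [timeBelow_eq, timeBelow_eq, h, ENNReal.toReal_add (tbM_ne_top a u p) hfin]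
  rw [add_sub_cancel_left, ENNReal.ofReal_toReal hfin]

/-- Lipschitz bound: `timeBelow a u q - timeBelow a u p ≤ q - p` for `p ≤ q`. -/
lemma timeBelow_lip (a : ℝ) {u : ℝ → ℝ} (hu : Continuous u) {p q : ℝ} (hpq : p ≤ q) :
    timeBelow a u q ≤ timeBelow a u p + (q - p) := by
  rcases le_or_gt p 0 with hp | hp
  · rcases le_or_gt q 0 with hq | hq
    · rw [timeBelow_nonpos a u hq, timeBelow_nonpos a u hp]; linarith
    · rw [timeBelow_nonpos a u hp]
      rw [timeBelow_eq]
      have : tbM a u q ≤ ENNReal.ofReal q := by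
        refine le_trans (measure_mono inter_subset_right) ?_
        rw [Real.volume_Ioc]; simp
      calc (tbM a u q).toReal ≤ (ENNReal.ofReal q).toReal :=
            ENNReal.toReal_mono (by simp) this
        _ = q := ENNReal.toReal_ofReal hq.le
        _ ≤ 0 + (q - p) := by linarith
  · have h := tbM_add a hu hp.le hpq
    have hle : volume ({x : ℝ | u x ≤ a} ∩ Set.Ioc p q) ≤ ENNReal.ofReal (q - p) := by
      refine le_trans (measure_mono inter_subset_right) ?_
      rw [Real.volume_Ioc]
    rw [timeBelow_eq, timeBelow_eq, h]
    have hfin : volume ({x : ℝ | u x ≤ a} ∩ Set.Ioc p q) ≠ ⊤ :=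
      ne_top_of_le_ne_top (by simp) hle
    rw [ENNReal.toReal_add (tbM_ne_top a u p) hfin]
    have : (volume ({x : ℝ | u x ≤ a} ∩ Set.Ioc p q)).toReal ≤ q - p := by
      refine le_trans (ENNReal.toReal_mono (by simp) hle) ?_
      rw [ENNReal.toReal_ofReal (by linarith)]
    linarith

/-- If the total time below level `a` is infinite, `timeBelow` is unbounded. -/
lemma timeBelow_unbounded (a : ℝ) {u : ℝ → ℝ}
    (hinf : volume {r : ℝ | 0 ≤ r ∧ u r ≤ a} = ⊤) (M : ℝ) :
    ∃ r : ℝ, 0 ≤ r ∧ M < timeBelow a u r := by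
  by_contra hcon
  push_neg at hcon
  have hM : ∀ n : ℕ, tbM a u n ≤ ENNReal.ofReal M := by
    intro n
    have := hcon n (Nat.cast_nonneg n)
    rw [timeBelow_eq] at this
    rw [← ENNReal.ofReal_toReal (tbM_ne_top a u n)]
    exact ENNReal.ofReal_le_ofReal this
  have hunion : ⋃ n : ℕ, ({x : ℝ | u x ≤ a} ∩ Set.Ioc 0 (n:ℝ)) = {x : ℝ | u x ≤ a} ∩ Set.Ioi 0 := by
    rw [← inter_iUnion]
    congr 1
    ext x
    simp only [mem_iUnion, mem_Ioc, mem_Ioi]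
    constructor
    · rintro ⟨n, h, -⟩; exact h
    · intro h
      obtain ⟨n, hn⟩ := exists_nat_gt x
      exact ⟨n, h, hn.le⟩
  have hsub : {r : ℝ | 0 ≤ r ∧ u r ≤ a} ⊆ ({x : ℝ | u x ≤ a} ∩ Set.Ioi 0) ∪ {(0:ℝ)} := by
    rintro x ⟨hx0, hxa⟩
    rcases eq_or_lt_of_le hx0 with h | h
    · right; simp [← h]
    · left; exact ⟨hxa, h⟩
  have hbig : volume ({x : ℝ | u x ≤ a} ∩ Set.Ioi 0) = ⊤ := by
    by_contra hne
    have := measure_union_le (μ := volume) ({x : ℝ | u x ≤ a} ∩ Set.Ioi 0) {(0:ℝ)}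
    have h1 := measure_mono (μ := volume) hsub
    rw [hinf] at h1
    have : volume (({x : ℝ | u x ≤ a} ∩ Set.Ioi 0) ∪ {(0:ℝ)}) < ⊤ := by
      refine lt_of_le_of_lt this ?_
      rw [Real.volume_singleton]
      simpa [lt_top_iff_ne_top, add_zero] using hne
    exact absurd h1 this.not_ge
  have : volume ({x : ℝ | u x ≤ a} ∩ Set.Ioi 0) ≤ ENNReal.ofReal M := by
    rw [← hunion]
    rw [Directed.measure_iUnion]
    · exact iSup_le fun n => hM n
    · intro m n
      rcases le_total m n with h | h
      · exact ⟨n, inter_subset_inter_right _ (Ioc_subset_Ioc_right (by exact_mod_cast h)),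
          subset_rfl⟩
      · exact ⟨m, subset_rfl,
          inter_subset_inter_right _ (Ioc_subset_Ioc_right (by exact_mod_cast h))⟩
  rw [hbig] at this
  simp at this

lemma tbi_bddBelow (a : ℝ) (u : ℝ → ℝ) (s : ℝ) :
    BddBelow {r : ℝ | 0 ≤ r ∧ s < timeBelow a u r} :=
  ⟨0, fun r hr => hr.1⟩

lemma tbi_nonempty (a : ℝ) {u : ℝ → ℝ}
    (hinf : volume {r : ℝ | 0 ≤ r ∧ u r ≤ a} = ⊤) (s : ℝ) :
    {r : ℝ | 0 ≤ r ∧ s < timeBelow a u r}.Nonempty := by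
  obtain ⟨r, hr0, hr⟩ := timeBelow_unbounded a hinf s
  exact ⟨r, hr0, hr⟩

lemma timeBelowInv_nonneg (a : ℝ) (u : ℝ → ℝ) (s : ℝ) : 0 ≤ timeBelowInv a u s :=
  Real.sInf_nonneg (fun r hr => hr.1)

lemma timeBelowInv_mono (a : ℝ) {u : ℝ → ℝ}
    (hinf : volume {r : ℝ | 0 ≤ r ∧ u r ≤ a} = ⊤) : Monotone (timeBelowInv a u) := by
  intro s t h
  refine csInf_le_csInf (tbi_bddBelow a u s) (tbi_nonempty a hinf t) ?_
  rintro r ⟨hr0, hr⟩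
  exact ⟨hr0, lt_of_le_of_lt h hr⟩

/-- `ρ (τ s) = s` for `s ≥ 0`. -/
lemma timeBelow_timeBelowInv (a : ℝ) {u : ℝ → ℝ} (hu : Continuous u)
    (hinf : volume {r : ℝ | 0 ≤ r ∧ u r ≤ a} = ⊤) {s : ℝ} (hs : 0 ≤ s) :
    timeBelow a u (timeBelowInv a u s) = s := by
  have hxA : timeBelowInv a u s = sInf {r : ℝ | 0 ≤ r ∧ s < timeBelow a u r} := rfl
  set A := {r : ℝ | 0 ≤ r ∧ s < timeBelow a u r} with hA
  set x := timeBelowInv a u s with hx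
  have hx0 : 0 ≤ x := timeBelowInv_nonneg a u s
  have hge : s ≤ timeBelow a u x := by
    refine le_of_forall_pos_le_add fun ε hε => ?_
    obtain ⟨r, hrA, hrlt⟩ := (csInf_lt_iff (tbi_bddBelow a u s) (tbi_nonempty a hinf s)).1
      (show sInf A < x + ε by rw [← hxA]; linarith)
    have h1 : timeBelow a u r ≤ timeBelow a u x + ε := by
      rcases le_total r x with h | h
      · have := timeBelow_mono a u h; linarith
      · have := timeBelow_lip a hu h; linarith
    linarith [hrA.2]
  have hle : timeBelow a u x ≤ s := by
    refine le_of_forall_pos_le_add fun ε hε => ?_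
    rcases lt_or_ge (x - ε) 0 with h | h
    · have := timeBelow_lip a hu (show (0:ℝ) ≤ x from hx0)
      rw [timeBelow_nonpos a u le_rfl] at this
      have : timeBelow a u x ≤ x := by linarith
      linarith
    · have hnotin : (x - ε) ∉ A := by
        intro hmem
        have hle2 : sInf A ≤ x - ε := csInf_le (tbi_bddBelow a u s) hmem
        rw [← hxA] at hle2
        linarith
      have h2 : timeBelow a u (x - ε) ≤ s := by
        by_contra hcon
        exact hnotin ⟨h, lt_of_not_ge hcon⟩
      have := timeBelow_lip a hu (show x - ε ≤ x by linarith)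
      linarith
  linarith

/-- If `u < a` on `Ioc p q`, `timeBelow` grows linearly there. -/
lemma timeBelow_linear (a : ℝ) {u : ℝ → ℝ} (hu : Continuous u) {p q : ℝ}
    (hp : 0 ≤ p) (hpq : p ≤ q) (hlt : ∀ z ∈ Set.Ioc p q, u z ≤ a) :
    timeBelow a u q = timeBelow a u p + (q - p) := by
  have h : {x : ℝ | u x ≤ a} ∩ Set.Ioc p q = Set.Ioc p q := by
    rw [inter_eq_self_of_subset_right]
    intro z hz; exact hlt z hz
  have := tbM_add a hu hp hpq
  rw [h, Real.volume_Ioc] at this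
  rw [timeBelow_eq, timeBelow_eq, this, ENNReal.toReal_add (tbM_ne_top a u p) (by simp),
    ENNReal.toReal_ofReal (by linarith)]

/-- `τ (ρ x) = x` when `u x < a` (strictly). -/
lemma timeBelowInv_timeBelow (a : ℝ) {u : ℝ → ℝ} (hu : Continuous u) {x : ℝ}
    (hx : 0 ≤ x) (hxa : u x < a) :
    timeBelowInv a u (timeBelow a u x) = x := by
  obtain ⟨δ, hδ, hball⟩ : ∃ δ > 0, ∀ z, |z - x| < δ → u z < a := by
    have hopen : IsOpen {z : ℝ | u z < a} := isOpen_lt hu continuous_const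
    obtain ⟨δ, hδ, hsub⟩ := Metric.isOpen_iff.1 hopen x hxa
    exact ⟨δ, hδ, fun z hz => hsub (by simpa [Real.dist_eq] using hz)⟩
  set A := {r : ℝ | 0 ≤ r ∧ timeBelow a u x < timeBelow a u r}
  have hkey : ∀ ε, 0 < ε → ε < δ → (x + ε) ∈ A := by
    intro ε hε hεδ
    refine ⟨by linarith, ?_⟩
    have := timeBelow_linear a hu hx (show x ≤ x + ε by linarith)
      (fun z hz => le_of_lt (hball z (by rw [abs_lt]; constructor <;> [linarith [hz.1]; linarith [hz.2]])))
    linarith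
  have hne : A.Nonempty := ⟨x + δ/2, hkey (δ/2) (by linarith) (by linarith)⟩
  have hub : ∀ r ∈ A, x ≤ r := by
    rintro r ⟨hr0, hr⟩
    by_contra hcon
    exact absurd (timeBelow_mono a u (le_of_not_ge hcon)) (not_le.2 hr)
  refine le_antisymm ?_ (le_csInf hne hub)
  refine le_of_forall_pos_le_add fun ε hε => ?_
  have := csInf_le (tbi_bddBelow a u _) (hkey (min (ε/2) (δ/2)) (by positivity) (by
    calc min (ε/2) (δ/2) ≤ δ/2 := min_le_right _ _
    _ < δ := by linarith))
  calc timeBelowInv a u (timeBelow a u x) ≤ x + min (ε/2) (δ/2) := this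
    _ ≤ x + ε := by have := min_le_left (ε/2) (δ/2); linarith

/-- `u (τ s) ≤ a` for `s ≥ 0`. -/
lemma apply_timeBelowInv_le (a : ℝ) {u : ℝ → ℝ} (hu : Continuous u)
    (hinf : volume {r : ℝ | 0 ≤ r ∧ u r ≤ a} = ⊤) {s : ℝ} (hs : 0 ≤ s) :
    u (timeBelowInv a u s) ≤ a := by
  by_contra hcon
  push_neg at hcon
  set x := timeBelowInv a u s with hx
  have hx0 : 0 ≤ x := timeBelowInv_nonneg a u s
  obtain ⟨δ, hδ, hball⟩ : ∃ δ > 0, ∀ z, |z - x| < δ → a < u z := by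
    have hopen : IsOpen {z : ℝ | a < u z} := isOpen_lt continuous_const hu
    obtain ⟨δ, hδ, hsub⟩ := Metric.isOpen_iff.1 hopen x hcon
    exact ⟨δ, hδ, fun z hz => hsub (by simpa [Real.dist_eq] using hz)⟩
  have hflat : timeBelow a u (x + δ/2) = s := by
    have hset : {z : ℝ | u z ≤ a} ∩ Set.Ioc x (x + δ/2) = ∅ := by
      rw [Set.eq_empty_iff_forall_notMem]
      rintro z ⟨hza, hz⟩
      have : a < u z := hball z (by rw [abs_lt]; constructor <;> [linarith [hz.1]; linarith [hz.2]])
      exact absurd hza (not_le.2 this)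
    have := tbM_add a hu hx0 (show x ≤ x + δ/2 by linarith)
    rw [hset, measure_empty, add_zero] at this
    rw [timeBelow_eq, this, ← timeBelow_eq]
    exact timeBelow_timeBelowInv a hu hinf hs
  have : x + δ/2 ≤ x := by
    refine le_csInf (tbi_nonempty a hinf s) ?_
    rintro r ⟨hr0, hr⟩
    by_contra hcon2
    push_neg at hcon2
    have := timeBelow_mono a u (le_of_lt hcon2)
    rw [hflat] at this
    linarith
  linarith

/-- L11: strict right increase of `ρ` at `τ s`. -/
lemma lt_timeBelow_timeBelowInv_add (a : ℝ) {u : ℝ → ℝ}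
    (hinf : volume {r : ℝ | 0 ≤ r ∧ u r ≤ a} = ⊤) (s : ℝ) {γ : ℝ} (hγ : 0 < γ) :
    s < timeBelow a u (timeBelowInv a u s + γ) := by
  obtain ⟨r, hrA, hrlt⟩ := (csInf_lt_iff (tbi_bddBelow a u s) (tbi_nonempty a hinf s)).1
    (show sInf {r : ℝ | 0 ≤ r ∧ s < timeBelow a u r} < timeBelowInv a u s + γ by
      rw [timeBelowInv] at *; linarith)
  exact lt_of_lt_of_le hrA.2 (timeBelow_mono a u hrlt.le)

lemma tbM_Ioc' (a : ℝ) {u : ℝ → ℝ} (hu : Continuous u) {p : ℝ} (q : ℝ) (hp : 0 ≤ p) :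
    volume ({x : ℝ | u x ≤ a} ∩ Set.Ioc p q)
      = ENNReal.ofReal (timeBelow a u q - timeBelow a u p) := by
  rcases le_or_gt p q with h | h
  · exact tbM_Ioc a hu hp h
  · rw [Ioc_eq_empty (not_lt.2 h.le), inter_empty, measure_empty]
    have := timeBelow_mono a u h.le
    rw [eq_comm, ENNReal.ofReal_eq_zero]
    linarith

lemma timeBelow_zero (a : ℝ) (u : ℝ → ℝ) : timeBelow a u 0 = 0 :=
  timeBelow_nonpos a u le_rfl

/-- Main pushforward identity. -/
lemma map_timeBelowInv (b : ℝ) {u : ℝ → ℝ} (hu : Continuous u)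
    (hinf : volume {r : ℝ | 0 ≤ r ∧ u r ≤ b} = ⊤) {t : ℝ} (ht : 0 ≤ t) :
    Measure.map (timeBelowInv b u) (volume.restrict (Set.Ioc 0 t))
      = volume.restrict ({x : ℝ | u x ≤ b} ∩ Set.Ioc 0 (timeBelowInv b u t)) := by
  have hmeas : Measurable (timeBelowInv b u) := (timeBelowInv_mono b hinf).measurable
  have hρτ : ∀ y : ℝ, 0 ≤ y → timeBelow b u (timeBelowInv b u y) = y :=
    fun y hy => timeBelow_timeBelowInv b hu hinf hy
  have hρ0 : timeBelow b u 0 = 0 := timeBelow_zero b u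
  have hμIoc : ∀ x1 x2 : ℝ,
      Measure.map (timeBelowInv b u) (volume.restrict (Set.Ioc 0 t)) (Set.Ioc x1 x2)
        = ENNReal.ofReal (min (timeBelow b u x2) t - max (timeBelow b u x1) 0) := by
    intro x1 x2
    rw [Measure.map_apply hmeas measurableSet_Ioc,
      Measure.restrict_apply (hmeas measurableSet_Ioc)]
    have hsub1 : timeBelowInv b u ⁻¹' (Set.Ioc x1 x2) ∩ Set.Ioc 0 t ⊆
        {timeBelow b u x1} ∪ Set.Ioc (max (timeBelow b u x1) 0) (min (timeBelow b u x2) t) := by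
      rintro y ⟨⟨hy1, hy2⟩, hy0, hyt⟩
      have hyy : timeBelow b u (timeBelowInv b u y) = y := hρτ y hy0.le
      have h1 : timeBelow b u x1 ≤ y := by rw [← hyy]; exact timeBelow_mono b u hy1.le
      have h2 : y ≤ timeBelow b u x2 := by rw [← hyy]; exact timeBelow_mono b u hy2
      rcases eq_or_lt_of_le h1 with h | h
      · left; simp [← h]
      · right; exact ⟨max_lt h hy0, le_min h2 hyt⟩
    have hsub2 : Set.Ioc (max (timeBelow b u x1) 0) (min (timeBelow b u x2) t)
          \ {timeBelow b u x2} ⊆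
        timeBelowInv b u ⁻¹' (Set.Ioc x1 x2) ∩ Set.Ioc 0 t := by
      rintro y ⟨⟨hy1, hy2⟩, hyne⟩
      simp only [mem_singleton_iff] at hyne
      have hy0 : 0 < y := lt_of_le_of_lt (le_max_right _ _) hy1
      have hyρ2 : y < timeBelow b u x2 := lt_of_le_of_ne (le_trans hy2 (min_le_left _ _)) hyne
      have hyρ1 : timeBelow b u x1 < y := lt_of_le_of_lt (le_max_left _ _) hy1
      have hx2 : 0 ≤ x2 := by
        by_contra hcon
        push_neg at hcon
        have : timeBelow b u x2 = 0 := timeBelow_nonpos b u hcon.le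
        rw [this] at hyρ2; linarith
      constructor
      · constructor
        · by_contra hcon
          push_neg at hcon
          have h3 := timeBelow_mono b u hcon
          rw [hρτ y hy0.le] at h3
          exact absurd h3 (not_le.2 hyρ1)
        · exact csInf_le (tbi_bddBelow b u y) ⟨hx2, hyρ2⟩
      · exact ⟨hy0, le_trans hy2 (min_le_right _ _)⟩
    refine le_antisymm ?_ ?_
    · refine le_trans (measure_mono hsub1) ?_
      refine le_trans (measure_union_le _ _) ?_
      rw [Real.volume_singleton, Real.volume_Ioc, zero_add]
    · calc ENNReal.ofReal (min (timeBelow b u x2) t - max (timeBelow b u x1) 0)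
          = volume (Set.Ioc (max (timeBelow b u x1) 0) (min (timeBelow b u x2) t)
              \ {timeBelow b u x2}) := by
            rw [measure_diff_null Real.volume_singleton, Real.volume_Ioc]
        _ ≤ _ := measure_mono hsub2
  have hνIoc : ∀ x1 x2 : ℝ,
      volume.restrict ({x : ℝ | u x ≤ b} ∩ Set.Ioc 0 (timeBelowInv b u t)) (Set.Ioc x1 x2)
        = ENNReal.ofReal (min (timeBelow b u x2) t - max (timeBelow b u x1) 0) := by
    intro x1 x2
    rw [Measure.restrict_apply measurableSet_Ioc]
    have hseteq : Set.Ioc x1 x2 ∩ ({x : ℝ | u x ≤ b} ∩ Set.Ioc 0 (timeBelowInv b u t))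
        = {x : ℝ | u x ≤ b} ∩ Set.Ioc (max 0 x1) (min (timeBelowInv b u t) x2) := by
      rw [← Set.Ioc_inter_Ioc]
      ext z; simp only [Set.mem_inter_iff, Set.mem_setOf_eq]; tauto
    rw [hseteq, tbM_Ioc' b hu _ (le_max_left _ _)]
    congr 1
    have h1 : timeBelow b u (min (timeBelowInv b u t) x2) = min t (timeBelow b u x2) := by
      rw [(timeBelow_mono b u).map_min, hρτ t ht]
    have h2 : timeBelow b u (max 0 x1) = max 0 (timeBelow b u x1) := by
      rw [(timeBelow_mono b u).map_max, hρ0]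
    rw [h1, h2, min_comm, max_comm]
  refine Measure.ext_of_Ioc' _ _ (fun x1 x2 _ => ?_) (fun x1 x2 _ => ?_)
  · rw [hμIoc x1 x2]; exact ENNReal.ofReal_ne_top
  · rw [hμIoc x1 x2, hνIoc x1 x2]

lemma timeBelow_chop {a b : ℝ} (hab : a ≤ b) {u : ℝ → ℝ} (hu : Continuous u)
    (hinfb : volume {r : ℝ | 0 ≤ r ∧ u r ≤ b} = ⊤) {t : ℝ} (ht : 0 ≤ t) :
    timeBelow a (chop b u) t = timeBelow a u (timeBelowInv b u t) := by
  have hmeas : Measurable (timeBelowInv b u) := (timeBelowInv_mono b hinfb).measurable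
  have h1 : tbM a (chop b u) t
      = Measure.map (timeBelowInv b u) (volume.restrict (Set.Ioc 0 t)) {x : ℝ | u x ≤ a} := by
    rw [Measure.map_apply hmeas (measurableSet_below hu),
      Measure.restrict_apply (hmeas (measurableSet_below hu))]
    rfl
  rw [timeBelow_eq, timeBelow_eq, h1, map_timeBelowInv b hu hinfb ht,
    Measure.restrict_apply (measurableSet_below hu)]
  congr 2
  ext z
  simp only [Set.mem_inter_iff, Set.mem_setOf_eq, tbM_set_eq]
  constructor
  · rintro ⟨h1, _, h3⟩; exact ⟨h1, h3⟩
  · rintro ⟨h1, h3⟩; exact ⟨h1, le_trans h1 hab, h3⟩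

/-- semigroup property of the chopping maps: for `0 < a < b < c` and any
continuous `u : [0,∞) → [0,c]` with `u 0 = 0` and `∫₀^∞ 1_{u(r) ≤ a} dr = ∞`,
`Π^{a,b} (Π^{b,c} u) = Π^{a,c} u` on `[0,∞)`. -/
theorem chop_semigroup
    (a b c : ℝ) (ha : 0 < a) (hab : a < b) (hbc : b < c)
    (u : ℝ → ℝ) (hu : Continuous u) (hrange : ∀ s : ℝ, u s ∈ Set.Icc 0 c)
    (hu0 : u 0 = 0)
    (hinf : MeasureTheory.volume {r : ℝ | 0 ≤ r ∧ u r ≤ a} = ⊤) :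
    ∀ s : ℝ, 0 ≤ s → chop a (chop b u) s = chop a u s := by
  intro s hs
  have hinfb : volume {r : ℝ | 0 ≤ r ∧ u r ≤ b} = ⊤ := by
    rw [eq_top_iff, ← hinf]
    exact measure_mono (fun r hr => ⟨hr.1, hr.2.trans hab.le⟩)
  set x0 := timeBelowInv a u s with hx0def
  have hx00 : 0 ≤ x0 := timeBelowInv_nonneg a u s
  have hux0 : u x0 ≤ a := apply_timeBelowInv_le a hu hinf hs
  have hux0b : u x0 < b := lt_of_le_of_lt hux0 hab
  set y0 := timeBelow b u x0 with hy0def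
  have hρax0 : timeBelow a u x0 = s := timeBelow_timeBelowInv a hu hinf hs
  have hτρ : timeBelowInv b u y0 = x0 := timeBelowInv_timeBelow b hu hx00 hux0b
  obtain ⟨δ0, hδ0, hball⟩ : ∃ δ0 > 0, ∀ z, |z - x0| < δ0 → u z < b := by
    have hopen : IsOpen {z : ℝ | u z < b} := isOpen_lt hu continuous_const
    obtain ⟨δ0, hδ0, hsub⟩ := Metric.isOpen_iff.1 hopen x0 hux0b
    exact ⟨δ0, hδ0, fun z hz => hsub (by simpa [Real.dist_eq] using hz)⟩
  have hub : ∀ ε : ℝ, 0 < ε →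
      ∃ r, (0 ≤ r ∧ s < timeBelow a (chop b u) r) ∧ r ≤ y0 + ε := by
    intro ε hε
    set δ := min ε (δ0/2) with hδdef
    have hδpos : 0 < δ := lt_min hε (by linarith)
    have hδle : δ ≤ δ0/2 := min_le_right _ _
    set r := timeBelow b u (x0 + δ) with hrdef
    have hr0 : 0 ≤ r := timeBelow_nonneg b u _
    have hrle : r ≤ y0 + ε := by
      have := timeBelow_lip b hu (show x0 ≤ x0 + δ by linarith)
      have := min_le_left ε (δ0/2)
      rw [hy0def]
      linarith
    have hlin : timeBelow b u (x0 + δ) = timeBelow b u (x0 + δ/2) + δ/2 := by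
      have := timeBelow_linear b hu (show (0:ℝ) ≤ x0 + δ/2 by linarith)
        (show x0 + δ/2 ≤ x0 + δ by linarith)
        (fun z hz => le_of_lt (hball z (by
          rw [abs_lt]
          constructor
          · linarith [hz.1]
          · linarith [hz.2])))
      rw [this]; ring
    have hτr : x0 + δ/2 ≤ timeBelowInv b u r := by
      by_contra hcon
      push_neg at hcon
      have h3 := timeBelow_mono b u hcon.le
      rw [timeBelow_timeBelowInv b hu hinfb hr0] at h3
      rw [hrdef, hlin] at h3
      have := timeBelow_mono b u (show x0 + δ/2 ≤ x0 + δ by linarith)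
      linarith
    refine ⟨r, ⟨hr0, ?_⟩, hrle⟩
    rw [timeBelow_chop hab.le hu hinfb hr0]
    have h4 : s < timeBelow a u (x0 + δ/2) :=
      lt_timeBelow_timeBelowInv_add a hinf s (by linarith : (0:ℝ) < δ/2)
    exact lt_of_lt_of_le h4 (timeBelow_mono a u hτr)
  have hkey : timeBelowInv a (chop b u) s = y0 := by
    have hBne : {r : ℝ | 0 ≤ r ∧ s < timeBelow a (chop b u) r}.Nonempty := by
      obtain ⟨r, hr, -⟩ := hub 1 one_pos
      exact ⟨r, hr⟩
    refine le_antisymm ?_ ?_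
    · refine le_of_forall_pos_le_add fun ε hε => ?_
      obtain ⟨r, hr, hrle⟩ := hub ε hε
      exact le_trans (csInf_le (tbi_bddBelow a (chop b u) s) hr) hrle
    · refine le_csInf hBne ?_
      rintro r ⟨hr0, hr⟩
      rw [timeBelow_chop hab.le hu hinfb hr0] at hr
      have hτr : x0 ≤ timeBelowInv b u r := by
        by_contra hcon
        push_neg at hcon
        have h3 := timeBelow_mono a u hcon.le
        rw [hρax0] at h3
        linarith
      have h5 := timeBelow_mono b u hτr
      rw [timeBelow_timeBelowInv b hu hinfb hr0] at h5
      exact h5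
  show chop b u (timeBelowInv a (chop b u) s) = u (timeBelowInv a u s)
  rw [hkey]
  show u (timeBelowInv b u y0) = u (timeBelowInv a u s)
  rw [hτρ]
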